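/- Let G be a strongly connected digraph and x, y chip-distributions with x ~ y. Then there exists a nonnegative integer vector f ∈ ℕ^V such that x = y + Lf. -/

import Mathlib

namespace ChipFiring

variable {V : Type*}

/-- Out-degree of a vertex: total multiplicity of edges leaving `v`. -/
def outdeg [Fintype V] (d : V → V → ℕ) (v : V) : ℕ := ∑ u, d v u

/-- In-degree of a vertex: total multiplicity of edges entering `v`. -/
def indeg [Fintype V] (d : V → V → ℕ) (v : V) : ℕ := ∑ u, d u v

/-- A digraph (multiplicity function) has no loops. -/
def Loopless (d : V → V → ℕ) : Prop := ∀ v, d v v = 0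

/-- Weak connectivity: each pair of vertices is joined by an undirected walk. -/
def WeaklyConnected (d : V → V → ℕ) : Prop :=
  ∀ u v : V, Relation.ReflTransGen (fun a b => d a b ≠ 0 ∨ d b a ≠ 0) u v

/-- Strong connectivity: each ordered pair of vertices is joined by a directed walk. -/
def StronglyConnected (d : V → V → ℕ) : Prop :=
  ∀ u v : V, Relation.ReflTransGen (fun a b => d a b ≠ 0) u v

/-- Eulerian: out-degree equals in-degree at each vertex. -/
def Eulerian [Fintype V] (d : V → V → ℕ) : Prop := ∀ v, outdeg d v = indeg d v

/-- The Laplacian matrix: `L(u,u) = -d⁺(u)`, and `L(u,v) = d(v,u)` for `u ≠ v`. -/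
def laplacian [Fintype V] [DecidableEq V] (d : V → V → ℕ) : Matrix V V ℤ :=
  fun u v => if u = v then -(outdeg d v : ℤ) else (d v u : ℤ)

/-- Firing vertex `v`: `v` sends one chip along each outgoing edge. -/
def fire [Fintype V] [DecidableEq V] (d : V → V → ℕ) (x : V → ℕ) (v : V) : V → ℕ :=
  fun u => if u = v then x v - outdeg d v else x u + d v u

/-- `LegalSeq d x α` : the sequence of firings `α` is legal from initial distribution `x`. -/
def LegalSeq [Fintype V] [DecidableEq V] (d : V → V → ℕ) : (V → ℕ) → List V → Prop
  | _, [] => True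
  | x, v :: rest => outdeg d v ≤ x v ∧ LegalSeq d (fire d x v) rest

/-- The chip-distribution obtained from `x` after performing the firings `α`. -/
def runGame [Fintype V] [DecidableEq V] (d : V → V → ℕ) : (V → ℕ) → List V → (V → ℕ)
  | x, [] => x
  | x, v :: rest => runGame d (fire d x v) rest

/-- The firing vector of a game: how many times each vertex is fired. -/
def firingVector [DecidableEq V] (α : List V) : V → ℕ := fun v => α.count v

/-- `x ⤳ y` : some legal game transforms `x` into `y`. -/
def Reaches [Fintype V] [DecidableEq V] (d : V → V → ℕ) (x y : V → ℕ) : Prop :=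
  ∃ α : List V, LegalSeq d x α ∧ runGame d x α = y

/-- A period vector: a nonnegative integer vector in the kernel of the Laplacian. -/
def PeriodVector [Fintype V] [DecidableEq V] (d : V → V → ℕ) (p : V → ℕ) : Prop :=
  (laplacian d).mulVec (fun v => (p v : ℤ)) = 0

/-- A vector `f ∈ ℕ^V` is reduced if `f ≥ p` fails for every nonzero period vector `p`. -/
def Reduced [Fintype V] [DecidableEq V] (d : V → V → ℕ) (f : V → ℕ) : Prop :=
  ∀ p : V → ℕ, PeriodVector d p → p ≠ 0 → ¬ (∀ v, p v ≤ f v)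

/-- A distribution is recurrent if a nonempty legal game transforms it back to itself. -/
def Recurrent [Fintype V] [DecidableEq V] (d : V → V → ℕ) (x : V → ℕ) : Prop :=
  ∃ α : List V, α ≠ [] ∧ LegalSeq d x α ∧ runGame d x α = x

/-- Linear equivalence: `x = y + Lz` for some integer vector `z`. -/
def LinEquiv [Fintype V] [DecidableEq V] (d : V → V → ℕ) (x y : V → ℕ) : Prop :=
  ∃ z : V → ℤ, ∀ v, (x v : ℤ) = (y v : ℤ) + (laplacian d).mulVec z v

/-- `x` is non-terminating: there is an infinite sequence of legal firings from `x`. -/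
def NonTerminating [Fintype V] [DecidableEq V] (d : V → V → ℕ) (x : V → ℕ) : Prop :=
  ∃ s : ℕ → V, ∀ n : ℕ, LegalSeq d x (List.ofFn (fun i : Fin n => s i))

end ChipFiring

namespace ChipFiring

/-- Existence of a strictly positive period vector on a strongly connected
digraph with at least two vertices. -/

theorem exists_pos_period [Fintype V] [DecidableEq V]
    (d : V → V → ℕ) (hloop : Loopless d) (hstrong : StronglyConnected d)
    (hnt : ∃ a b : V, a ≠ b) :
    ∃ P : V → ℕ, (∀ v, 0 < P v) ∧
      (laplacian d).mulVec (fun v => (P v : ℤ)) = 0 := by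
  classical
  obtain ⟨a₀, b₀, hab⟩ := hnt
  have : Nonempty V := ⟨a₀⟩
  -- every out-degree positive
  have hdeg : ∀ v : V, 0 < outdeg d v := by
    intro v
    have hw : ∃ w : V, w ≠ v := by
      by_cases h : v = a₀
      · exact ⟨b₀, by rw [h]; exact fun hh => hab hh.symm⟩
      · exact ⟨a₀, fun hh => h hh.symm⟩
    obtain ⟨w, hw⟩ := hw
    rcases (hstrong v w).cases_head with h | ⟨c, hc, _⟩
    · exact absurd h.symm hw
    · calc 0 < d v c := Nat.pos_of_ne_zero hc
        _ ≤ outdeg d v := Finset.single_le_sum (fun _ _ => Nat.zero_le _) (Finset.mem_univ c)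
  have hdegQ : ∀ v : V, (0:ℚ) < (outdeg d v : ℚ) := fun v => by exact_mod_cast hdeg v
  -- the transition matrix transposed
  set M : Matrix V V ℚ := fun u v => (d v u : ℚ) / (outdeg d v : ℚ) with hM
  have hMnn : ∀ u v, 0 ≤ M u v := fun u v => div_nonneg (by positivity) (le_of_lt (hdegQ v))
  have hMdiag : ∀ v, M v v = 0 := fun v => by simp [hM, hloop v]
  have hcol : ∀ v, ∑ u, M u v = 1 := by
    intro v
    rw [hM]
    simp only
    rw [← Finset.sum_div]
    rw [div_eq_one_iff_eq (ne_of_gt (hdegQ v))]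
    exact_mod_cast rfl
  -- fixed vector of M
  have hdet : (M - 1).det = 0 := by
    rw [← Matrix.det_transpose]
    rw [← Matrix.exists_mulVec_eq_zero_iff]
    refine ⟨fun _ => 1, ?_, ?_⟩
    · intro h
      exact one_ne_zero (congrFun h a₀)
    · funext u
      simp only [Matrix.mulVec, dotProduct, Matrix.transpose_apply, Matrix.sub_apply,
        mul_one, Matrix.one_apply, Pi.zero_apply]
      rw [Finset.sum_sub_distrib, hcol u]
      simp
  obtain ⟨r, hr0, hrB⟩ := (Matrix.exists_mulVec_eq_zero_iff).mpr hdet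
  have hrM : M.mulVec r = r := by
    have := hrB
    rw [Matrix.sub_mulVec, Matrix.one_mulVec, sub_eq_zero] at this
    exact this
  -- take absolute values
  set s : V → ℚ := fun v => |r v| with hsdef
  have hsnn : ∀ v, 0 ≤ s v := fun v => abs_nonneg _
  have hle : ∀ u, s u ≤ M.mulVec s u := by
    intro u
    have : s u = |M.mulVec r u| := by rw [hrM]
    rw [this]
    calc |M.mulVec r u| = |∑ v, M u v * r v| := rfl
      _ ≤ ∑ v, |M u v * r v| := Finset.abs_sum_le_sum_abs _ _
      _ = ∑ v, M u v * s v := by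
          refine Finset.sum_congr rfl fun v _ => ?_
          rw [abs_mul, abs_of_nonneg (hMnn u v)]
      _ = M.mulVec s u := rfl
  have hsum : ∑ u, M.mulVec s u = ∑ u, s u := by
    calc ∑ u, M.mulVec s u = ∑ u, ∑ v, M u v * s v := rfl
      _ = ∑ v, (∑ u, M u v) * s v := by rw [Finset.sum_comm]; simp [Finset.sum_mul]
      _ = ∑ v, s v := by simp [hcol]
  have hsM : ∀ u, M.mulVec s u = s u := by
    have := (Finset.sum_eq_sum_iff_of_le (fun u _ => hle u)).mp hsum.symm
    intro u; exact (this u (Finset.mem_univ u)).symm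
  -- positivity of s everywhere
  obtain ⟨u₀, hu₀⟩ : ∃ u, r u ≠ 0 := by
    by_contra h
    push_neg at h
    exact hr0 (funext h)
  have hs₀ : 0 < s u₀ := abs_pos.mpr hu₀
  have hspos : ∀ w, 0 < s w := by
    intro w
    have hpath := hstrong u₀ w
    induction hpath with
    | refl => exact hs₀
    | tail hbc hedge ih =>
      rename_i b c
      have h1 : 0 < M c b := div_pos (by exact_mod_cast Nat.pos_of_ne_zero hedge) (hdegQ b)
      have h2 : M c b * s b ≤ ∑ v, M c v * s v :=
        Finset.single_le_sum (fun v _ => mul_nonneg (hMnn c v) (hsnn v)) (Finset.mem_univ b)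
      have : 0 < M.mulVec s c := lt_of_lt_of_le (mul_pos h1 ih) h2
      rwa [hsM c] at this
  -- the rational period vector
  set p : V → ℚ := fun v => s v / (outdeg d v : ℚ) with hpdef
  have hppos : ∀ v, 0 < p v := fun v => div_pos (hspos v) (hdegQ v)
  have hkerQ : ∀ u, ∑ v, ((laplacian d u v : ℚ)) * p v = 0 := by
    intro u
    have key : ∀ v, ((laplacian d u v : ℚ)) * p v
        = M u v * s v - (if u = v then s v else 0) := by
      intro v
      by_cases h : u = v
      · subst h
        simp only [laplacian, if_pos rfl, hMdiag u, zero_mul, zero_sub, hpdef]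
        push_cast
        field_simp
        rw [mul_div_cancel_left₀ _ (ne_of_gt (hdegQ u))]
      · simp only [laplacian, if_neg h, hpdef, hM, sub_zero]
        push_cast
        ring
    rw [Finset.sum_congr rfl fun v _ => key v, Finset.sum_sub_distrib]
    have h1 : ∑ v, M u v * s v = s u := hsM u
    have h2 : (∑ v, if u = v then s v else 0) = s u := by simp
    rw [h1, h2, sub_self]
  -- clear denominators
  set N : ℕ := ∏ v, (p v).den with hNdef
  have hNdvd : ∀ v, (p v).den ∣ N := fun v => Finset.dvd_prod_of_mem _ (Finset.mem_univ v)
  set P : V → ℕ := fun v => (N / (p v).den) * (p v).num.toNat with hPdef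
  have hPcast : ∀ v, (P v : ℚ) = (N : ℚ) * p v := by
    intro v
    have hnum : (0:ℤ) < (p v).num := Rat.num_pos.mpr (hppos v)
    have hden : ((p v).den : ℚ) ≠ 0 := by exact_mod_cast (p v).den_nz
    rw [hPdef]
    push_cast [Nat.cast_div (hNdvd v) hden, Int.toNat_of_nonneg (le_of_lt hnum)]
    have hnt : (((p v).num.toNat : ℕ) : ℚ) = ((p v).num : ℚ) := by
      exact_mod_cast congrArg (Int.cast : ℤ → ℚ) (Int.toNat_of_nonneg (le_of_lt hnum))
    rw [hnt, div_mul_eq_mul_div, mul_div_assoc, Rat.num_div_den]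
  have hPpos : ∀ v, 0 < P v := by
    intro v
    have hNpos : 0 < N := Finset.prod_pos (fun v _ => (p v).pos)
    have : (0:ℚ) < (P v : ℚ) := by
      rw [hPcast v]; exact mul_pos (by exact_mod_cast hNpos) (hppos v)
    exact_mod_cast this
  refine ⟨P, hPpos, ?_⟩
  funext u
  have hQ : ∑ v, ((laplacian d u v : ℚ)) * (P v : ℚ) = 0 := by
    calc ∑ v, ((laplacian d u v : ℚ)) * (P v : ℚ)
        = (N:ℚ) * ∑ v, ((laplacian d u v : ℚ)) * p v := by
          rw [Finset.mul_sum]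
          exact Finset.sum_congr rfl fun v _ => by rw [hPcast v]; ring
      _ = 0 := by rw [hkerQ u, mul_zero]
  have : ((∑ v, laplacian d u v * (P v : ℤ) : ℤ) : ℚ) = 0 := by
    push_cast
    exact hQ
  have hz : ∑ v, laplacian d u v * (P v : ℤ) = 0 := by exact_mod_cast this
  simpa [Matrix.mulVec, dotProduct] using hz

/-- On a strongly connected digraph, if `x ~ y` then `x = y + Lf` for
some nonnegative integer vector `f`. -/
theorem exists_nonneg_of_linEquiv {V : Type*} [Fintype V] [DecidableEq V]
    (d : V → V → ℕ) (hloop : Loopless d) (hstrong : StronglyConnected d)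
    (x y : V → ℕ) (hequiv : LinEquiv d x y) :
    ∃ f : V → ℕ, ∀ v, (x v : ℤ) = (y v : ℤ) +
      (laplacian d).mulVec (fun u => (f u : ℤ)) v := by
  classical
  obtain ⟨z, hz⟩ := hequiv
  by_cases hnt : ∃ a b : V, a ≠ b
  · obtain ⟨P, hPpos, hPker⟩ := exists_pos_period d hloop hstrong hnt
    set k : ℕ := ∑ v, (z v).natAbs with hk
    have hnn : ∀ v, 0 ≤ z v + (k : ℤ) * (P v : ℤ) := by
      intro v
      have h1 : (z v).natAbs ≤ k :=
        Finset.single_le_sum (f := fun w => (z w).natAbs) (fun _ _ => Nat.zero_le _) (Finset.mem_univ v)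
      have h2 : (1 : ℤ) ≤ (P v : ℤ) := by exact_mod_cast hPpos v
      have h3 : (k : ℤ) ≤ (k : ℤ) * (P v : ℤ) := le_mul_of_one_le_right (by positivity) h2
      have h4 : ((z v).natAbs : ℤ) ≤ (k : ℤ) := by exact_mod_cast h1
      omega
    refine ⟨fun v => (z v + (k : ℤ) * (P v : ℤ)).toNat, fun v => ?_⟩
    have hcast : (fun u => (((z u + (k : ℤ) * (P u : ℤ)).toNat : ℕ) : ℤ))
        = fun u => z u + (k : ℤ) * (P u : ℤ) := by
      funext u; exact Int.toNat_of_nonneg (hnn u)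
    rw [hcast]
    have : (laplacian d).mulVec (fun u => z u + (k : ℤ) * (P u : ℤ)) v
        = (laplacian d).mulVec z v := by
      have hsplit : (fun u => z u + (k : ℤ) * (P u : ℤ))
          = z + (k : ℤ) • (fun u => (P u : ℤ)) := by
        funext u; simp [mul_comm]
      rw [hsplit, Matrix.mulVec_add, Matrix.mulVec_smul, hPker]
      simp
    rw [this]
    exact hz v
  · -- subsingleton case
    push_neg at hnt
    refine ⟨fun _ => 0, fun v => ?_⟩
    have hdiag : ∀ u w : V, laplacian d u w = 0 := by
      intro u w
      have huw : u = w := hnt u w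
      subst huw
      simp [laplacian, outdeg]
      have : ∀ w : V, d u w = 0 := fun w => by rw [hnt w u]; exact hloop u
      simp [this]
    have hLz : (laplacian d).mulVec z v = 0 := by
      simp [Matrix.mulVec, dotProduct, hdiag]
    have hLf : (laplacian d).mulVec (fun _ => ((0:ℕ):ℤ)) v = 0 := by
      simp [Matrix.mulVec, dotProduct, hdiag]
    rw [hLf, hz v, hLz]

end ChipFiring
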